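/- Let A, B, C be an affinely independent triangle in the Euclidean plane whose circumcenter is the origin (‖A‖ = ‖B‖ = ‖C‖ = R, the circumradius). Let a = dist(B,C), b = dist(C,A), c = dist(A,B), let S be twice the area of the triangle, and set S_A = (b²+c²−a²)/2, S_B = (c²+a²−b²)/2, S_C = (a²+b²−c²)/2. Let u, v be real numbers with (3u+v)·S² ≠ 0, and let X be the point with barycentric weights f_A = u·S² + v·S_B·S_C, f_B = u·S² + v·S_C·S_A, f_C = u·S² + v·S_A·S_B, i.e., X = (f_A·A + f_B·B + f_C·C)/(f_A + f_B + f_C). Then X = λ·(A + B + C) where λ = (u+v)/(3u+v). In other words, X is the P_λ point of triangle ABC with λ = τ(u,v) = (u+v)/(3u+v). -/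

import Mathlib

/-- Conversion of Shinagawa coefficients: With the setup of Kimberling's lemma
(triangle `A, B, C` with circumcenter at the origin, Conway symbols, constant Shinagawa
coefficients `(u, v)` with `(3u+v)·S² ≠ 0`), the center `X` with barycentric weights
`(u·S² + v·S_B·S_C : u·S² + v·S_C·S_A : u·S² + v·S_A·S_B)` is the `P_λ` point of the triangle
with `λ = τ(u,v) = (u+v)/(3u+v)`, i.e. `X = ((u+v)/(3u+v)) • (A + B + C)`. -/
theorem stmt_11 (A B C : EuclideanSpace ℝ (Fin 2))
    (hindep : AffineIndependent ℝ ![A, B, C])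
    (R : ℝ) (hA : ‖A‖ = R) (hB : ‖B‖ = R) (hC : ‖C‖ = R)
    (a b c S SA SB SC : ℝ)
    (hab : a = dist B C) (hbc : b = dist C A) (hca : c = dist A B)
    (hS : S = |(B 0 - A 0) * (C 1 - A 1) - (B 1 - A 1) * (C 0 - A 0)|)
    (hSA : SA = (b ^ 2 + c ^ 2 - a ^ 2) / 2)
    (hSB : SB = (c ^ 2 + a ^ 2 - b ^ 2) / 2)
    (hSC : SC = (a ^ 2 + b ^ 2 - c ^ 2) / 2)
    (u v : ℝ) (huv : (3 * u + v) * S ^ 2 ≠ 0)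
    (fA fB fC : ℝ)
    (hfA : fA = u * S ^ 2 + v * SB * SC)
    (hfB : fB = u * S ^ 2 + v * SC * SA)
    (hfC : fC = u * S ^ 2 + v * SA * SB)
    (X : EuclideanSpace ℝ (Fin 2))
    (hX : X = (fA + fB + fC)⁻¹ • (fA • A + fB • B + fC • C)) :
    X = ((u + v) / (3 * u + v)) • (A + B + C) := by
  have hnormsq : ∀ P : EuclideanSpace ℝ (Fin 2), ‖P‖ ^ 2 = P 0 ^ 2 + P 1 ^ 2 := by
    intro P
    rw [EuclideanSpace.norm_eq, Real.sq_sqrt (by positivity)]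
    simp [Fin.sum_univ_two, sq_abs]
  have hdistsq : ∀ P Q : EuclideanSpace ℝ (Fin 2),
      dist P Q ^ 2 = (P 0 - Q 0) ^ 2 + (P 1 - Q 1) ^ 2 := by
    intro P Q
    rw [EuclideanSpace.dist_eq, Real.sq_sqrt (by positivity)]
    simp [Fin.sum_univ_two, Real.dist_eq, sq_abs]
  have hp : A 0 ^ 2 + A 1 ^ 2 = B 0 ^ 2 + B 1 ^ 2 := by
    rw [← hnormsq, ← hnormsq, hA, hB]
  have hq : B 0 ^ 2 + B 1 ^ 2 = C 0 ^ 2 + C 1 ^ 2 := by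
    rw [← hnormsq, ← hnormsq, hB, hC]
  have ha2 : a ^ 2 = (B 0 - C 0) ^ 2 + (B 1 - C 1) ^ 2 := by rw [hab, hdistsq]
  have hb2 : b ^ 2 = (C 0 - A 0) ^ 2 + (C 1 - A 1) ^ 2 := by rw [hbc, hdistsq]
  have hc2 : c ^ 2 = (A 0 - B 0) ^ 2 + (A 1 - B 1) ^ 2 := by rw [hca, hdistsq]
  have hS2 : S ^ 2 = ((B 0 - A 0) * (C 1 - A 1) - (B 1 - A 1) * (C 0 - A 0)) ^ 2 := by
    rw [hS, sq_abs]
  subst hSA hSB hSC hfA hfB hfC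
  -- Heron-type identity
  have hid : (b ^ 2 + c ^ 2 - a ^ 2) / 2 * ((c ^ 2 + a ^ 2 - b ^ 2) / 2)
      + (c ^ 2 + a ^ 2 - b ^ 2) / 2 * ((a ^ 2 + b ^ 2 - c ^ 2) / 2)
      + (a ^ 2 + b ^ 2 - c ^ 2) / 2 * ((b ^ 2 + c ^ 2 - a ^ 2) / 2) = S ^ 2 := by
    rw [ha2, hb2, hc2, hS2]; ring
  -- the orthocenter identity, componentwise
  have hkey0 : (c ^ 2 + a ^ 2 - b ^ 2) / 2 * ((a ^ 2 + b ^ 2 - c ^ 2) / 2) * A 0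
      + (a ^ 2 + b ^ 2 - c ^ 2) / 2 * ((b ^ 2 + c ^ 2 - a ^ 2) / 2) * B 0
      + (b ^ 2 + c ^ 2 - a ^ 2) / 2 * ((c ^ 2 + a ^ 2 - b ^ 2) / 2) * C 0
      = S ^ 2 * (A 0 + B 0 + C 0) := by
    rw [ha2, hb2, hc2, hS2]
    linear_combination
      ((-1)*A 0*B 1^2 + 2*A 0*B 1*C 1 + (-1)*A 0*C 1^2 + A 1*B 0*B 1 - A 1*B 0*C 1
        - A 1*B 1*C 0 + A 1*C 0*C 1 - B 0*B 1*C 1 + B 0*C 1^2 + B 1^2*C 0 - B 1*C 0*C 1) * hp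
      + (A 0*A 1*B 1 - A 0*A 1*C 1 - A 0*B 1^2 + A 0*B 1*C 1 - A 1^2*B 0 + A 1^2*C 0
        + A 1*B 0*B 1 + A 1*B 0*C 1 - 2*A 1*B 1*C 0 - B 0*B 1*C 1 + B 1^2*C 0) * hq
  have hkey1 : (c ^ 2 + a ^ 2 - b ^ 2) / 2 * ((a ^ 2 + b ^ 2 - c ^ 2) / 2) * A 1
      + (a ^ 2 + b ^ 2 - c ^ 2) / 2 * ((b ^ 2 + c ^ 2 - a ^ 2) / 2) * B 1
      + (b ^ 2 + c ^ 2 - a ^ 2) / 2 * ((c ^ 2 + a ^ 2 - b ^ 2) / 2) * C 1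
      = S ^ 2 * (A 1 + B 1 + C 1) := by
    rw [ha2, hb2, hc2, hS2]
    linear_combination
      (A 0*B 0*B 1 - A 0*B 0*C 1 - A 0*B 1*C 0 + A 0*C 0*C 1 - A 1*B 0^2 + 2*A 1*B 0*C 0
        - A 1*C 0^2 - B 0^2*B 1 + 2*B 0^2*C 1 - B 0*B 1*C 0 - B 0*C 0*C 1 - B 1^3
        + B 1^2*C 1 + 2*B 1*C 0^2 + B 1*C 1^2 - C 0^2*C 1 - C 1^3) * hp
      + (A 0*A 1*B 0 - A 0*A 1*C 0 + A 0*B 0*B 1 - 2*A 0*B 0*C 1 + A 0*B 1*C 0 + A 1^2*B 1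
        - A 1^2*C 1 - A 1*B 0^2 + A 1*B 0*C 0 - B 0^2*B 1 + 2*B 0^2*C 1 - B 0*B 1*C 0
        - B 1^3 + B 1^2*C 1) * hq
  set SA := (b ^ 2 + c ^ 2 - a ^ 2) / 2 with hSA
  set SB := (c ^ 2 + a ^ 2 - b ^ 2) / 2 with hSB
  set SC := (a ^ 2 + b ^ 2 - c ^ 2) / 2 with hSC
  have hS2ne : S ^ 2 ≠ 0 := fun h => huv (by rw [h]; ring)
  have h3uv : (3 * u + v) ≠ 0 := fun h => huv (by rw [h]; ring)
  have hsum : (u * S ^ 2 + v * SB * SC) + (u * S ^ 2 + v * SC * SA)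
      + (u * S ^ 2 + v * SA * SB) = (3 * u + v) * S ^ 2 := by
    linear_combination v * hid
  rw [hX, hsum]
  have hvec : (u * S ^ 2 + v * SB * SC) • A + (u * S ^ 2 + v * SC * SA) • B
      + (u * S ^ 2 + v * SA * SB) • C = ((u + v) * S ^ 2) • (A + B + C) := by
    ext i
    fin_cases i <;>
      simp only [Fin.mk_zero, Fin.mk_one, PiLp.smul_apply, PiLp.add_apply, smul_eq_mul] <;>
      [linear_combination v * hkey0; linear_combination v * hkey1]
  rw [hvec, smul_smul]
  congr 1
  field_simp
  exact mul_div_cancel_left₀ (u + v) (fun h => hS2ne (by rw [h]; ring))
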